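/- Let n ≥ 2, k > 0, and for i = 1,…,n let p_i > 0, q_i − p_i > 0, η_i > 0, ζ_i ≥ 0. Define β_{ζ,k}^{(p,q)}(φ; η) = (1/k^{n−1}) ∫_{E_{n-1}} ∏_{i=1}^n t_i^{φ_i/k−1} ₁F_{1,k}(p_i; q_i; −η_i^k/(k t_i) − ζ_i^k t_i/η_i^k) dt and β_k(φ; η) = (1/k^{n−1}) ∫_{E_{n-1}} ∏_i t_i^{φ_i/k−1} e^{−η_i^k/(k t_i)} dt. Then for all φ ∈ (0,∞)^n: β_{ζ,k}^{(p,q)}(φ; η) ≥ β_k(φ; η) · ∏_{i=1}^n ₁F_{1,k}(p_i; q_i; −ζ_i^k/η_i^k). -/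

import Mathlib

open MeasureTheory Real Set

noncomputable section

/-- Open standard (n-1)-simplex in ℝ^{n-1}. -/
def simplexInt (n : ℕ) : Set (Fin (n-1) → ℝ) :=
  {t | (∀ i, 0 < t i) ∧ ∑ i, t i < 1}

/-- Barycentric coordinates: `t_1, …, t_{n-1}` and `t_n = 1 - ∑_{i<n} t_i`. -/
def bary (n : ℕ) (t : Fin (n-1) → ℝ) (i : Fin n) : ℝ :=
  if h : (i : ℕ) < n - 1 then t ⟨i, h⟩ else 1 - ∑ j, t j

/-- Product of the n barycentric coordinates. -/
def piT (n : ℕ) (t : Fin (n-1) → ℝ) : ℝ := ∏ i : Fin n, bary n t i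

/-- Euler-integral confluent hypergeometric k-function ₁F_{1,k}(a;b;l). -/
def F1k (k a b l : ℝ) : ℝ :=
  (1/k) * (Real.Gamma b / (Real.Gamma a * Real.Gamma (b-a))) *
    ∫ u in Set.Ioo (0:ℝ) 1, u ^ (a/k - 1) * (1-u) ^ ((b-a)/k - 1) * Real.exp (l*u)

/-- Beta k-function of n variables. -/
def betaK (n : ℕ) (k : ℝ) (φ : Fin n → ℝ) : ℝ :=
  (1/k^(n-1)) * ∫ t in simplexInt n, ∏ i, bary n t i ^ (φ i / k - 1)

/-- Extended beta k-function β_k(φ; η). -/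
def betaKe (n : ℕ) (k : ℝ) (φ : Fin n → ℝ) (η : ℝ) : ℝ :=
  (1/k^(n-1)) * ∫ t in simplexInt n,
    (∏ i, bary n t i ^ (φ i / k - 1)) * Real.exp (-(η^k)/(k * piT n t))

/-- Generalized beta k-function of the first kind. -/
def betaFirst (n : ℕ) (k a b η ζ : ℝ) (φ : Fin n → ℝ) : ℝ :=
  (1/k^(n-1)) * ∫ t in simplexInt n,
    (∏ i, bary n t i ^ (φ i / k - 1)) *
      F1k k a b (-(η^k)/(k * piT n t) - ζ^k * piT n t / η^k)

/-- Generalized beta k-function of the second kind. -/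
def betaSecond (n : ℕ) (k : ℝ) (p q η ζ φ : Fin n → ℝ) : ℝ :=
  (1/k^(n-1)) * ∫ t in simplexInt n,
    ∏ i, (bary n t i ^ (φ i / k - 1) *
      F1k k (p i) (q i) (-((η i)^k)/(k * bary n t i) - (ζ i)^k * bary n t i / (η i)^k))

/-- Extended beta k-function of the second kind (vector η). -/
def betaKe2 (n : ℕ) (k : ℝ) (φ η : Fin n → ℝ) : ℝ :=
  (1/k^(n-1)) * ∫ t in simplexInt n,
    ∏ i, (bary n t i ^ (φ i / k - 1) * Real.exp (-((η i)^k)/(k * bary n t i)))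

lemma betaBase_int {x y : ℝ} (hx : 0 < x) (hy : 0 < y) :
    IntegrableOn (fun u : ℝ => u ^ (x - 1) * (1 - u) ^ (y - 1)) (Ioo (0:ℝ) 1) := by
  have h := Complex.betaIntegral_convergent (u := (x:ℂ)) (v := (y:ℂ)) (by simpa) (by simpa)
  rw [intervalIntegrable_iff, uIoc_of_le (by norm_num : (0:ℝ) ≤ 1)] at h
  have h3 := (h.mono_set Ioo_subset_Ioc_self).norm
  refine IntegrableOn.congr_fun h3 (fun u hu => ?_) measurableSet_Ioo
  rw [norm_mul]
  have h1 : ‖(u:ℂ) ^ ((x:ℂ) - 1)‖ = u ^ (x - 1) := by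
    rw [Complex.norm_cpow_eq_rpow_re_of_pos hu.1]
    norm_num
  have h2 : ‖(1 - (u:ℂ)) ^ ((y:ℂ) - 1)‖ = (1 - u) ^ (y - 1) := by
    have : (1 - (u:ℂ)) = ((1 - u : ℝ) : ℂ) := by push_cast; ring
    rw [this, Complex.norm_cpow_eq_rpow_re_of_pos (by linarith [hu.2])]
    norm_num
  rw [h1, h2]

lemma betaExp_int {x y : ℝ} (hx : 0 < x) (hy : 0 < y) (l : ℝ) :
    IntegrableOn (fun u : ℝ => u ^ (x - 1) * (1 - u) ^ (y - 1) * Real.exp (l * u))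
      (Ioo (0:ℝ) 1) := by
  refine Integrable.mono' ((betaBase_int hx hy).const_mul (Real.exp |l|)) ?_ ?_
  · apply AEMeasurable.aestronglyMeasurable
    fun_prop
  · refine (ae_restrict_iff' measurableSet_Ioo).2 (Filter.Eventually.of_forall fun u hu => ?_)
    have h0 : (0:ℝ) ≤ u ^ (x - 1) * (1 - u) ^ (y - 1) :=
      mul_nonneg (rpow_nonneg hu.1.le _) (rpow_nonneg (by linarith [hu.2]) _)
    rw [norm_mul, norm_of_nonneg h0, norm_of_nonneg (Real.exp_pos _).le, mul_comm (Real.exp |l|)]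
    refine mul_le_mul_of_nonneg_left (Real.exp_le_exp.2 ?_) h0
    calc l * u ≤ |l * u| := le_abs_self _
    _ = |l| * |u| := abs_mul _ _
    _ ≤ |l| * 1 := by
        refine mul_le_mul_of_nonneg_left ?_ (abs_nonneg l)
        rw [abs_of_pos hu.1]; exact hu.2.le
    _ = |l| := mul_one _
lemma pref_nonneg (hk : 0 < k) (ha : 0 < a) (hba : 0 < b - a) : 0 ≤ (1/k) * (Real.Gamma b / (Real.Gamma a * Real.Gamma (b-a))) := by
  have hb : 0 < b := by linarith
  have := Real.Gamma_pos_of_pos hb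
  have := Real.Gamma_pos_of_pos ha
  have := Real.Gamma_pos_of_pos hba
  positivity

lemma F1k_nonneg (hk : 0 < k) (ha : 0 < a) (hba : 0 < b - a) (l : ℝ) : 0 ≤ F1k k a b l := by
  refine mul_nonneg (pref_nonneg hk ha hba) (setIntegral_nonneg measurableSet_Ioo fun u hu => ?_)
  have h1 : (0:ℝ) ≤ u ^ (a/k - 1) := rpow_nonneg hu.1.le _
  have h2 : (0:ℝ) ≤ (1-u) ^ ((b-a)/k - 1) := rpow_nonneg (by linarith [hu.2]) _
  positivity

lemma F1k_mono (hk : 0 < k) (ha : 0 < a) (hba : 0 < b - a) : Monotone (F1k k a b) := by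
  intro l1 l2 hl
  unfold F1k
  refine mul_le_mul_of_nonneg_left ?_ (pref_nonneg hk ha hba)
  refine setIntegral_mono_on (betaExp_int (by positivity) (by positivity) l1)
    (betaExp_int (by positivity) (by positivity) l2) measurableSet_Ioo fun u hu => ?_
  have h1 : (0:ℝ) ≤ u ^ (a/k - 1) := rpow_nonneg hu.1.le _
  have h2 : (0:ℝ) ≤ (1-u) ^ ((b-a)/k - 1) := rpow_nonneg (by linarith [hu.2]) _
  have : Real.exp (l1 * u) ≤ Real.exp (l2 * u) :=
    Real.exp_le_exp.2 (mul_le_mul_of_nonneg_right hl hu.1.le)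
  exact mul_le_mul_of_nonneg_left this (mul_nonneg h1 h2)

lemma F1k_key (hk : 0 < k) (ha : 0 < a) (hba : 0 < b - a) {A B c : ℝ} (hA : 0 ≤ A) (hB : 0 ≤ B) (hc0 : 0 < c) (hc1 : c ≤ 1) :
    Real.exp (-A) * F1k k a b (-B) ≤ F1k k a b (-A - B * c) := by
  unfold F1k
  rw [mul_left_comm]
  refine mul_le_mul_of_nonneg_left ?_ (pref_nonneg hk ha hba)
  rw [← MeasureTheory.integral_const_mul]
  refine setIntegral_mono_on
    ((betaExp_int (by positivity) (by positivity) (-B)).const_mul _)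
    (betaExp_int (by positivity) (by positivity) (-A - B * c)) measurableSet_Ioo fun u hu => ?_
  have h1 : (0:ℝ) ≤ u ^ (a/k - 1) := rpow_nonneg hu.1.le _
  have h2 : (0:ℝ) ≤ (1-u) ^ ((b-a)/k - 1) := rpow_nonneg (by linarith [hu.2]) _
  rw [mul_left_comm, ← Real.exp_add]
  refine mul_le_mul_of_nonneg_left (Real.exp_le_exp.2 ?_) (mul_nonneg h1 h2)
  nlinarith [mul_nonneg hA (by linarith [hu.2] : (0:ℝ) ≤ 1 - u),
    mul_nonneg (mul_nonneg hB hu.1.le) (by linarith : (0:ℝ) ≤ 1 - c)]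
lemma measurable_bary (n : ℕ) (i : Fin n) :
    Measurable (fun t : Fin (n-1) → ℝ => bary n t i) := by
  unfold bary
  by_cases h : (i : ℕ) < n - 1
  · simp only [dif_pos h]; exact measurable_pi_apply _
  · simp only [dif_neg h]
    exact measurable_const.sub (Finset.measurable_sum _ fun j _ => measurable_pi_apply j)

lemma measurableSet_simplexInt (n : ℕ) : MeasurableSet (simplexInt n) := by
  have : simplexInt n = (⋂ i, {t : Fin (n-1) → ℝ | 0 < t i}) ∩ {t | ∑ i, t i < 1} := by
    ext t; simp [simplexInt, mem_iInter]
  rw [this]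
  exact (MeasurableSet.iInter fun i =>
      measurableSet_lt measurable_const (measurable_pi_apply i)).inter
    (measurableSet_lt (Finset.measurable_sum _ fun j _ => measurable_pi_apply j) measurable_const)

lemma bary_pos {n : ℕ} {t : Fin (n-1) → ℝ} (ht : t ∈ simplexInt n) (i : Fin n) :
    0 < bary n t i := by
  unfold bary
  by_cases h : (i : ℕ) < n - 1
  · simp only [dif_pos h]; exact ht.1 _
  · simp only [dif_neg h]; linarith [ht.2]

lemma bary_lt_one {n : ℕ} (hn : 2 ≤ n) {t : Fin (n-1) → ℝ} (ht : t ∈ simplexInt n) (i : Fin n) :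
    bary n t i < 1 := by
  have hne : Nonempty (Fin (n-1)) := ⟨⟨0, by omega⟩⟩
  unfold bary
  by_cases h : (i : ℕ) < n - 1
  · simp only [dif_pos h]
    calc t ⟨i, h⟩ ≤ ∑ j, t j :=
          Finset.single_le_sum (fun j _ => (ht.1 j).le) (Finset.mem_univ _)
    _ < 1 := ht.2
  · simp only [dif_neg h]
    have : 0 < ∑ j, t j := Finset.sum_pos (fun j _ => ht.1 j) Finset.univ_nonempty
    linarith

lemma bary_sum {m : ℕ} (t : Fin m → ℝ) : ∑ i : Fin (m+1), bary (m+1) t i = 1 := by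
  rw [Fin.sum_univ_castSucc]
  have hlast : bary (m+1) t (Fin.last m) = 1 - ∑ j, t j := by
    unfold bary; rw [dif_neg (by simp)]
    rfl
  have hcs : ∀ j : Fin m, bary (m+1) t (Fin.castSucc j) = t j := by
    intro j
    unfold bary
    rw [dif_pos (by simpa using j.2)]
    congr 1
  rw [hlast, Finset.sum_congr rfl fun j _ => hcs j]
  ring

lemma rpow_mul_exp_le {x α c : ℝ} (hx0 : 0 < x) (hx1 : x ≤ 1) (hc : 0 < c) :
    x ^ α * Real.exp (-(c / x)) ≤ ((⌈-α⌉₊ + 1 : ℝ) / c) ^ (⌈-α⌉₊ + 1) := by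
  set N : ℕ := ⌈-α⌉₊ + 1 with hNdef
  have hN : 0 < (N:ℝ) := by positivity
  have hαN : 0 ≤ α + N := by
    have := Nat.le_ceil (-α)
    have : -α ≤ (N:ℝ) := by push_cast [hNdef]; linarith
    linarith
  have h1 : (c / ((N:ℝ) * x)) ^ N ≤ Real.exp (c / x) := by
    calc (c/((N:ℝ)*x))^N ≤ (1 + c/((N:ℝ)*x))^N := by
          refine pow_le_pow_left₀ (by positivity) (by linarith [div_pos hc (by positivity : (0:ℝ) < (N:ℝ)*x)]) N
    _ ≤ (Real.exp (c/((N:ℝ)*x)))^N := by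
          refine pow_le_pow_left₀ (by positivity) ?_ N
          linarith [Real.add_one_le_exp (c/((N:ℝ)*x))]
    _ = Real.exp (c/((N:ℝ)*x) * N) := by rw [← Real.exp_nat_mul]; ring_nf
    _ = Real.exp (c / x) := by
          congr 1
          field_simp
  have hpos : (0:ℝ) < (c / ((N:ℝ) * x)) ^ N := by positivity
  have h2 : Real.exp (-(c/x)) ≤ ((N:ℝ)*x/c)^N := by
    rw [Real.exp_neg]
    have := inv_anti₀ hpos h1
    calc (Real.exp (c/x))⁻¹ ≤ ((c / ((N:ℝ) * x)) ^ N)⁻¹ := this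
    _ = ((N:ℝ)*x/c)^N := by rw [← inv_pow, inv_div]
  calc x ^ α * Real.exp (-(c/x)) ≤ x ^ α * (((N:ℝ)*x/c)^N) :=
        mul_le_mul_of_nonneg_left h2 (rpow_nonneg hx0.le α)
  _ = ((N:ℝ)/c)^N * (x^α * x^(N:ℕ)) := by
        rw [show (N:ℝ)*x/c = ((N:ℝ)/c) * x by ring, mul_pow]; ring
  _ = ((N:ℝ)/c)^N * x^(α + N) := by
        rw [← Real.rpow_natCast x N, ← Real.rpow_add hx0]
  _ ≤ ((N:ℝ)/c)^N * 1 := by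
        refine mul_le_mul_of_nonneg_left (Real.rpow_le_one hx0.le hx1 hαN) (by positivity)
  _ = ((N:ℝ)/c)^N := mul_one _
  _ = ((⌈-α⌉₊ + 1 : ℝ) / c) ^ N := by norm_num [hNdef]
/-- integrability of a product of rpow's on the open unit cube -/
lemma cube_int {m : ℕ} (β : Fin m → ℝ) (hβ : ∀ j, -1 < β j) :
    IntegrableOn (fun t : Fin m → ℝ => ∏ j, (t j) ^ (β j))
      (Set.univ.pi fun _ => Ioo (0:ℝ) 1) := by
  have h1 : ∀ j : Fin m, Integrable ((Ioo (0:ℝ) 1).indicator fun x : ℝ => x ^ β j) volume := by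
    intro j
    rw [integrable_indicator_iff measurableSet_Ioo]
    have h := intervalIntegral.intervalIntegrable_rpow' (a := 0) (b := 1) (hβ j)
    rw [intervalIntegrable_iff, uIoc_of_le (by norm_num : (0:ℝ) ≤ 1)] at h
    exact h.mono_set Ioo_subset_Ioc_self
  have h2 := MeasureTheory.Integrable.fintype_prod (𝕜 := ℝ)
    (f := fun (j : Fin m) (x : ℝ) => (Ioo (0:ℝ) 1).indicator (fun x : ℝ => x ^ β j) x) h1
  refine (integrable_indicator_iff (MeasurableSet.univ_pi fun _ => measurableSet_Ioo)).mp ?_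
  have heq : (Set.univ.pi fun _ : Fin m => Ioo (0:ℝ) 1).indicator
      (fun t : Fin m → ℝ => ∏ j, (t j) ^ (β j)) =
      fun t : Fin m → ℝ => ∏ j, (Ioo (0:ℝ) 1).indicator (fun x : ℝ => x ^ β j) (t j) := by
    funext t
    by_cases ht : t ∈ Set.univ.pi fun _ : Fin m => Ioo (0:ℝ) 1
    · rw [indicator_of_mem ht]
      exact (Finset.prod_congr rfl fun j _ =>
        (indicator_of_mem (show t j ∈ Ioo (0:ℝ) 1 from ht j (Set.mem_univ j)) (fun x : ℝ => x ^ β j)).symm)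
    · rw [indicator_of_notMem ht]
      rw [Set.mem_pi] at ht
      push_neg at ht
      obtain ⟨j, -, hj⟩ := ht
      exact (Finset.prod_eq_zero (Finset.mem_univ j) (indicator_of_notMem hj (fun x : ℝ => x ^ β j))).symm
  rw [heq]
  exact h2

lemma simplex_subset_cube {m : ℕ} :
    simplexInt (m+1) ⊆ Set.univ.pi fun _ : Fin m => Ioo (0:ℝ) 1 := by
  intro t ht j _
  refine ⟨ht.1 j, ?_⟩
  calc t j ≤ ∑ i, t i := Finset.single_le_sum (fun i _ => (ht.1 i).le) (Finset.mem_univ _)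
  _ < 1 := ht.2

/-- integrability of a product of rpow's on the open unit cube -/
lemma dir_last {m : ℕ} (hm : 1 ≤ m) (α : Fin (m+1) → ℝ) (hα : ∀ i, -1 < α i) :
    IntegrableOn (fun t : Fin m → ℝ => ∏ i, bary (m+1) t i ^ α i)
      (simplexInt (m+1) ∩ {t | 1/(m+1:ℝ) ≤ bary (m+1) t (Fin.last m)}) := by
  have hS : MeasurableSet (simplexInt (m+1) ∩ {t | 1/(m+1:ℝ) ≤ bary (m+1) t (Fin.last m)}) :=
    (measurableSet_simplexInt (m+1)).inter
      (measurableSet_le measurable_const (measurable_bary (m+1) (Fin.last m)))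
  set c0 : ℝ := max 1 ((1/(m+1:ℝ)) ^ α (Fin.last m)) with hc0
  have hc0nn : 0 ≤ c0 := le_trans zero_le_one (le_max_left _ _)
  -- the majorant
  have hmaj : IntegrableOn (fun t : Fin m → ℝ => c0 * ∏ j, (t j) ^ (α (Fin.castSucc j)))
      (simplexInt (m+1) ∩ {t | 1/(m+1:ℝ) ≤ bary (m+1) t (Fin.last m)}) := by
    refine IntegrableOn.mono_set ?_ ((Set.inter_subset_left).trans simplex_subset_cube)
    exact (cube_int (fun j => α (Fin.castSucc j)) (fun j => hα _)).const_mul c0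
  refine Integrable.mono' hmaj ?_ ?_
  · refine ((Finset.measurable_prod Finset.univ fun i _ => ?_).aestronglyMeasurable).restrict
    exact (measurable_bary (m+1) i).pow_const _
  · refine (ae_restrict_iff' hS).2 (Filter.Eventually.of_forall fun t ht => ?_)
    have htS := ht.1
    have hblast : bary (m+1) t (Fin.last m) ^ α (Fin.last m) ≤ c0 := by
      rcases le_or_gt 0 (α (Fin.last m)) with h | h
      · refine le_trans ?_ (le_max_left _ _)
        exact Real.rpow_le_one (bary_pos htS _).le (bary_lt_one (by omega) htS _).le h
      · refine le_trans ?_ (le_max_right _ _)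
        exact Real.rpow_le_rpow_of_nonpos (by positivity) ht.2 h.le
    have hsplit : (∏ i, bary (m+1) t i ^ α i) =
        (∏ j : Fin m, (t j) ^ (α (Fin.castSucc j))) * bary (m+1) t (Fin.last m) ^ α (Fin.last m) := by
      rw [Fin.prod_univ_castSucc]
      congr 1
      refine Finset.prod_congr rfl fun j _ => ?_
      congr 1
      unfold bary
      rw [dif_pos (by simpa using j.2)]
      congr 1
    have hnn : 0 ≤ ∏ i, bary (m+1) t i ^ α i :=
      Finset.prod_nonneg fun i _ => rpow_nonneg (bary_pos htS i).le _
    rw [norm_of_nonneg hnn, hsplit, mul_comm c0]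
    refine mul_le_mul_of_nonneg_left hblast ?_
    exact Finset.prod_nonneg fun j _ => rpow_nonneg (htS.1 j).le _
def reflL (i' : Fin m) : (Fin m → ℝ) →ₗ[ℝ] (Fin m → ℝ) where
  toFun t := fun j => if j = i' then -∑ l, t l else t j
  map_add' t s := by
    funext j
    by_cases h : j = i' <;> simp [h, Finset.sum_add_distrib]
    ring
  map_smul' c t := by
    funext j
    by_cases h : j = i' <;> simp [h, Finset.mul_sum]

def reflMap (i' : Fin m) (t : Fin m → ℝ) : Fin m → ℝ :=
  fun j => if j = i' then 1 - ∑ l, t l else t j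

lemma measurable_reflMap (i' : Fin m) : Measurable (reflMap i') := by
  apply measurable_pi_lambda
  intro j
  by_cases h : j = i' <;> simp only [reflMap, h, if_true, if_false]
  · exact measurable_const.sub (Finset.measurable_sum _ fun l _ => measurable_pi_apply l)
  · exact measurable_pi_apply j

lemma det_reflL (i' : Fin m) : LinearMap.det (reflL i') = -1 := by
  rw [← LinearMap.det_toMatrix']
  have hcr : ∀ j k : Fin m, (Matrix.replicateCol Unit (Pi.single i' (1:ℝ)) *
      Matrix.replicateRow Unit fun k => if k = i' then (-2:ℝ) else -1) j k =
      (if j = i' then (1:ℝ) else 0) * (if k = i' then -2 else -1) := by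
    intro j k
    rw [Matrix.mul_apply]
    simp [Matrix.replicateCol_apply, Matrix.replicateRow_apply, Pi.single_apply]
  have : LinearMap.toMatrix' (reflL i') =
      1 + Matrix.replicateCol Unit (Pi.single i' (1:ℝ)) *
        Matrix.replicateRow Unit (fun k => if k = i' then (-2:ℝ) else -1) := by
    ext j k
    rw [LinearMap.toMatrix'_apply]
    rw [Matrix.add_apply, hcr, Matrix.one_apply]
    simp only [reflL, LinearMap.coe_mk, AddHom.coe_mk, Finset.sum_ite_eq', Finset.mem_univ,
      if_true]
    by_cases h : j = i'
    · subst h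
      rcases eq_or_ne j k with rfl | hk
      · simp; norm_num
      · simp [hk, Ne.symm hk]
    · simp [h, Pi.single_apply]
  have hdet := Matrix.det_one_add_replicateCol_mul_replicateRow (ι := Unit) (Pi.single i' (1:ℝ))
    (fun k => if k = i' then (-2:ℝ) else -1)
  rw [this]
  refine hdet.trans ?_
  rw [dotProduct_single]
  norm_num

lemma sum_reflMap (i' : Fin m) (t : Fin m → ℝ) : ∑ j, reflMap i' t j = 1 - t i' := by
  have : (reflMap i' t) = Function.update t i' (1 - ∑ l, t l) := by
    funext j
    rw [Function.update_apply]
    rfl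
  rw [this, Finset.sum_update_of_mem (Finset.mem_univ i')]
  have h2 : ∑ x ∈ Finset.univ \ {i'}, t x = (∑ x, t x) - t i' := by
    rw [Finset.sum_sdiff_eq_sub (by simp), Finset.sum_singleton]
  rw [h2]
  ring

lemma reflMap_invol (i' : Fin m) (t : Fin m → ℝ) : reflMap i' (reflMap i' t) = t := by
  funext j
  by_cases h : j = i'
  · subst h
    show (if j = j then 1 - ∑ l, reflMap j t l else reflMap j t j) = t j
    rw [if_pos rfl, sum_reflMap]
    ring
  · simp [reflMap, h]

lemma measurePreserving_reflMap (i' : Fin m) :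
    MeasurePreserving (reflMap i') (volume : Measure (Fin m → ℝ)) volume := by
  have hL : MeasurePreserving (reflL i') (volume : Measure (Fin m → ℝ)) volume := by
    refine ⟨?_, ?_⟩
    · apply measurable_pi_lambda
      intro j
      by_cases h : j = i' <;>
        simp only [reflL, LinearMap.coe_mk, AddHom.coe_mk, h, if_true, if_false]
      · exact (Finset.measurable_sum _ fun l _ => measurable_pi_apply l).neg
      · exact measurable_pi_apply j
    · rw [Real.map_linearMap_volume_pi_eq_smul_volume_pi (by rw [det_reflL]; norm_num)]
      rw [det_reflL]
      norm_num
  have : reflMap i' = (fun t => (Pi.single i' (1:ℝ)) + t) ∘ (reflL i') := by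
    funext t j
    simp only [Function.comp_apply, Pi.add_apply, Pi.single_apply, reflMap, reflL,
      LinearMap.coe_mk, AddHom.coe_mk]
    by_cases h : j = i' <;> simp [h]
    ring
  rw [this]
  exact (measurePreserving_add_left volume (Pi.single i' 1)).comp hL

def reflE (i' : Fin m) : MeasurableEquiv (Fin m → ℝ) (Fin m → ℝ) :=
  { toFun := reflMap i'
    invFun := reflMap i'
    left_inv := reflMap_invol i'
    right_inv := reflMap_invol i'
    measurable_toFun := measurable_reflMap i'
    measurable_invFun := measurable_reflMap i' }
lemma reflE_eq {m : ℕ} (i' : Fin m) :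
    (reflE i' : (Fin m → ℝ) → (Fin m → ℝ)) = reflMap i' := rfl
lemma reflMap_mem_simplex {m : ℕ} (i' : Fin m) {t : Fin m → ℝ}
    (ht : t ∈ simplexInt (m+1)) : reflMap i' t ∈ simplexInt (m+1) := by
  obtain ⟨ht1, ht2⟩ := ht
  have ht1' : ∀ j : Fin m, 0 < t j := ht1
  have ht2' : ∑ l : Fin m, t l < 1 := ht2
  constructor
  · intro j
    by_cases h : j = i'
    · subst h
      show (0:ℝ) < if j = j then 1 - ∑ l, t l else t j
      rw [if_pos rfl]
      linarith [ht2']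
    · show (0:ℝ) < if j = i' then 1 - ∑ l, t l else t j
      rw [if_neg h]
      exact ht1' j
  · show ∑ j, reflMap i' t j < 1
    rw [sum_reflMap]
    linarith [ht1' i']

lemma bary_reflMap {m : ℕ} (hm : 1 ≤ m) {i : Fin (m+1)} (hi : (i:ℕ) < m) (t : Fin m → ℝ)
    (j : Fin (m+1)) :
    bary (m+1) (reflMap ⟨i, hi⟩ t) j = bary (m+1) t (Equiv.swap i (Fin.last m) j) := by
  set i' : Fin m := ⟨i, hi⟩
  have hine : i ≠ Fin.last m := by
    intro h
    rw [h] at hi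
    simp at hi
  rcases eq_or_ne j i with rfl | hji
  · rw [Equiv.swap_apply_left]
    have h1 : bary (m+1) (reflMap i' t) j = 1 - ∑ l, t l := by
      unfold bary
      rw [dif_pos (by simpa using hi)]
      show (if (⟨(j:ℕ), _⟩ : Fin m) = i' then 1 - ∑ l, t l else t _) = _
      rw [if_pos rfl]
    have h2 : bary (m+1) t (Fin.last m) = 1 - ∑ l, t l := by
      unfold bary
      rw [dif_neg (by simp)]
      rfl
    rw [h1, h2]
  · rcases eq_or_ne j (Fin.last m) with rfl | hjl
    · rw [Equiv.swap_apply_right]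
      have h1 : bary (m+1) (reflMap i' t) (Fin.last m) = 1 - ∑ l, reflMap i' t l := by
        unfold bary
        rw [dif_neg (by simp)]
        rfl
      have h2 : bary (m+1) t i = t i' := by
        unfold bary
        rw [dif_pos (by simpa using hi)]
      rw [h1, h2, sum_reflMap]
      ring
    · rw [Equiv.swap_apply_of_ne_of_ne hji hjl]
      have hjm : (j:ℕ) < m := by
        have := j.isLt
        have : (j:ℕ) ≠ m := fun h => hjl (Fin.ext h)
        omega
      unfold bary
      rw [dif_pos (by simpa using hjm), dif_pos (by simpa using hjm)]
      show (if (⟨(j:ℕ), _⟩ : Fin m) = i' then 1 - ∑ l, t l else t _) = _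
      rw [if_neg (by
        intro h
        apply hji
        apply Fin.ext
        simpa [i'] using congrArg Fin.val h)]

lemma dirichlet {n : ℕ} (hn : 2 ≤ n) (α : Fin n → ℝ) (hα : ∀ i, -1 < α i) :
    IntegrableOn (fun t : Fin (n-1) → ℝ => ∏ i, bary n t i ^ α i) (simplexInt n) := by
  obtain ⟨m, rfl⟩ : ∃ m, n = m + 1 := ⟨n-1, by omega⟩
  have hm : 1 ≤ m := by omega
  have hcov : simplexInt (m+1) ⊆
      ⋃ i : Fin (m+1), simplexInt (m+1) ∩ {t | 1/(m+1:ℝ) ≤ bary (m+1) t i} := by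
    intro t ht
    by_contra hc
    simp only [mem_iUnion, mem_inter_iff, mem_setOf_eq, not_exists, not_and] at hc
    have hlt : ∀ i, bary (m+1) t i < 1/(m+1:ℝ) := fun i => lt_of_not_ge (hc i ht)
    have h1 : (1:ℝ) < 1 := by
      calc (1:ℝ) = ∑ i : Fin (m+1), bary (m+1) t i := (bary_sum t).symm
      _ < ∑ _i : Fin (m+1), 1/(m+1:ℝ) :=
          Finset.sum_lt_sum_of_nonempty Finset.univ_nonempty fun i _ => hlt i
      _ = 1 := by
          rw [Finset.sum_const, Finset.card_univ, Fintype.card_fin]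
          rw [nsmul_eq_mul]; push_cast
          field_simp
    exact lt_irrefl _ h1
  refine IntegrableOn.mono_set (integrableOn_finite_iUnion.mpr fun i => ?_) hcov
  by_cases hi : (i:ℕ) < m
  · -- reflection case
    set i' : Fin m := ⟨i, hi⟩
    have hkey := (measurePreserving_reflMap i').integrableOn_comp_preimage
      (f := fun t : Fin m → ℝ => ∏ j, bary (m+1) t j ^ α j)
      (s := simplexInt (m+1) ∩ {t | 1/(m+1:ℝ) ≤ bary (m+1) t i})
      ((reflE_eq i') ▸ (reflE i').measurableEmbedding)
    apply hkey.mp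
    have hpre : (reflMap i') ⁻¹' (simplexInt (m+1) ∩ {t | 1/(m+1:ℝ) ≤ bary (m+1) t i}) =
        simplexInt (m+1) ∩ {t | 1/(m+1:ℝ) ≤ bary (m+1) t (Fin.last m)} := by
      ext t
      simp only [mem_preimage, mem_inter_iff, mem_setOf_eq]
      constructor
      · rintro ⟨h1, h2⟩
        have ht : t ∈ simplexInt (m+1) := by
          have := reflMap_mem_simplex i' h1
          rwa [reflMap_invol] at this
        refine ⟨ht, ?_⟩
        have := bary_reflMap hm hi t i
        rw [Equiv.swap_apply_left] at this
        rwa [this] at h2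
      · rintro ⟨h1, h2⟩
        refine ⟨reflMap_mem_simplex i' h1, ?_⟩
        have := bary_reflMap hm hi t i
        rw [Equiv.swap_apply_left] at this
        show (1:ℝ)/(m+1:ℝ) ≤ bary (m+1) (reflMap i' t) i
        rw [this]
        exact h2
    rw [hpre]
    have hfun : ((fun t : Fin m → ℝ => ∏ j, bary (m+1) t j ^ α j) ∘ (reflMap i')) =
        fun t : Fin m → ℝ => ∏ j, bary (m+1) t j ^ (α (Equiv.swap i (Fin.last m) j)) := by
      funext t
      show ∏ j, bary (m+1) (reflMap i' t) j ^ α j = _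
      refine Fintype.prod_equiv (Equiv.swap i (Fin.last m)) _ _ fun j => ?_
      rw [bary_reflMap hm hi t j, Equiv.swap_apply_self]
    rw [hfun]
    exact dir_last hm (fun j => α (Equiv.swap i (Fin.last m) j)) (fun j => hα _)
  · have hieq : i = Fin.last m := by
      apply Fin.ext
      have := i.isLt
      simp only [Fin.val_last]
      omega
    rw [hieq]
    exact dir_last hm α hα
lemma volume_simplex_lt_top (n : ℕ) : volume (simplexInt n) < ⊤ := by
  have hsub : simplexInt n ⊆ Set.univ.pi fun _ : Fin (n-1) => Ioo (0:ℝ) 1 := by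
    intro t ht j _
    refine ⟨ht.1 j, ?_⟩
    calc t j ≤ ∑ i, t i := Finset.single_le_sum (fun i _ => (ht.1 i).le) (Finset.mem_univ _)
    _ < 1 := ht.2
  calc volume (simplexInt n) ≤ volume (Set.univ.pi fun _ : Fin (n-1) => Ioo (0:ℝ) 1) :=
        measure_mono hsub
  _ = ∏ _j : Fin (n-1), volume (Ioo (0:ℝ) 1) := volume_pi_pi _
  _ < ⊤ := by simp [Real.volume_Ioo]

lemma integrableOn_LHS (n : ℕ) (hn : 2 ≤ n) {k : ℝ} (hk : 0 < k) (φ η : Fin n → ℝ)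
    (hη : ∀ i, 0 < η i) :
    IntegrableOn (fun t : Fin (n-1) → ℝ =>
      ∏ i, (bary n t i ^ (φ i / k - 1) * Real.exp (-((η i)^k)/(k * bary n t i))))
      (simplexInt n) := by
  set M : Fin n → ℝ := fun i =>
    ((⌈-(φ i / k - 1)⌉₊ + 1 : ℝ) / (η i ^ k / k)) ^ (⌈-(φ i / k - 1)⌉₊ + 1) with hM
  have hci : ∀ i, 0 < η i ^ k / k := fun i => div_pos (Real.rpow_pos_of_pos (hη i) k) hk
  have hMnn : ∀ i, 0 ≤ M i := by
    intro i
    rw [hM]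
    have := Real.rpow_pos_of_pos (hη i) k
    positivity
  have hfac : ∀ {t : Fin (n-1) → ℝ}, t ∈ simplexInt n → ∀ i,
      bary n t i ^ (φ i / k - 1) * Real.exp (-((η i)^k)/(k * bary n t i)) ≤ M i := by
    intro t ht i
    have harg : -((η i)^k)/(k * bary n t i) = -((η i ^ k / k) / bary n t i) := by
      field_simp
    rw [harg, hM]
    exact rpow_mul_exp_le (bary_pos ht i) (bary_lt_one hn ht i).le (hci i)
  refine Integrable.mono' (g := fun _ => ∏ i, M i)
    (integrableOn_const (volume_simplex_lt_top n).ne) ?_ ?_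
  · refine ((Finset.measurable_prod Finset.univ fun i _ => ?_).aestronglyMeasurable).restrict
    exact ((measurable_bary n i).pow_const _).mul
      ((measurable_const.div ((measurable_const.mul (measurable_bary n i)))).exp)
  · refine (ae_restrict_iff' (measurableSet_simplexInt n)).2
      (Filter.Eventually.of_forall fun t ht => ?_)
    have hnn : ∀ i ∈ Finset.univ, (0:ℝ) ≤
        bary n t i ^ (φ i / k - 1) * Real.exp (-((η i)^k)/(k * bary n t i)) := fun i _ =>
      mul_nonneg (rpow_nonneg (bary_pos ht i).le _) (Real.exp_pos _).le
    rw [norm_of_nonneg (Finset.prod_nonneg hnn)]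
    exact Finset.prod_le_prod hnn fun i _ => hfac ht i

lemma integrableOn_RHS (n : ℕ) (hn : 2 ≤ n) {k : ℝ} (hk : 0 < k) (p q η ζ φ : Fin n → ℝ)
    (hp : ∀ i, 0 < p i) (hqp : ∀ i, 0 < q i - p i)
    (hη : ∀ i, 0 < η i) (hζ : ∀ i, 0 ≤ ζ i) (hφ : ∀ i, 0 < φ i) :
    IntegrableOn (fun t : Fin (n-1) → ℝ =>
      ∏ i, (bary n t i ^ (φ i / k - 1) *
        F1k k (p i) (q i) (-((η i)^k)/(k * bary n t i) - (ζ i)^k * bary n t i / (η i)^k)))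
      (simplexInt n) := by
  set C : Fin n → ℝ := fun i => F1k k (p i) (q i) 0 with hC
  have hα : ∀ i, -1 < φ i / k - 1 := fun i => by
    have := div_pos (hφ i) hk
    linarith
  have hCnn : ∀ i, 0 ≤ C i := fun i => F1k_nonneg hk (hp i) (hqp i) 0
  have hmaj := (dirichlet hn (fun i => φ i / k - 1) hα).const_mul (∏ i, C i)
  refine Integrable.mono' hmaj ?_ ?_
  · refine ((Finset.measurable_prod Finset.univ fun i _ => ?_).aestronglyMeasurable).restrict
    refine ((measurable_bary n i).pow_const _).mul ?_
    refine (F1k_mono hk (hp i) (hqp i)).measurable.comp ?_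
    exact ((measurable_const.div ((measurable_const.mul (measurable_bary n i)))).sub
      ((measurable_const.mul (measurable_bary n i)).div measurable_const))
  · refine (ae_restrict_iff' (measurableSet_simplexInt n)).2
      (Filter.Eventually.of_forall fun t ht => ?_)
    have hl : ∀ i, (-((η i)^k)/(k * bary n t i) - (ζ i)^k * bary n t i / (η i)^k) ≤ 0 := by
      intro i
      have h1 : 0 < (η i)^k := Real.rpow_pos_of_pos (hη i) k
      have h2 : 0 ≤ (ζ i)^k := Real.rpow_nonneg (hζ i) k
      have h3 : 0 < bary n t i := bary_pos ht i
      have h4 : (0:ℝ) ≤ ((η i)^k)/(k * bary n t i) := by positivity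
      have h5 : (0:ℝ) ≤ (ζ i)^k * bary n t i / (η i)^k := by positivity
      have : -((η i)^k)/(k * bary n t i) = -(((η i)^k)/(k * bary n t i)) := by ring
      rw [this]
      linarith
    have hfac : ∀ i ∈ Finset.univ, bary n t i ^ (φ i / k - 1) *
        F1k k (p i) (q i) (-((η i)^k)/(k * bary n t i) - (ζ i)^k * bary n t i / (η i)^k) ≤
        bary n t i ^ (φ i / k - 1) * C i := fun i _ =>
      mul_le_mul_of_nonneg_left (F1k_mono hk (hp i) (hqp i) (hl i))
        (rpow_nonneg (bary_pos ht i).le _)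
    have hnn : ∀ i ∈ Finset.univ, (0:ℝ) ≤ bary n t i ^ (φ i / k - 1) *
        F1k k (p i) (q i) (-((η i)^k)/(k * bary n t i) - (ζ i)^k * bary n t i / (η i)^k) :=
      fun i _ => mul_nonneg (rpow_nonneg (bary_pos ht i).le _)
        (F1k_nonneg hk (hp i) (hqp i) _)
    rw [norm_of_nonneg (Finset.prod_nonneg hnn)]
    calc (∏ i, (bary n t i ^ (φ i / k - 1) * F1k k (p i) (q i)
          (-((η i)^k)/(k * bary n t i) - (ζ i)^k * bary n t i / (η i)^k))) ≤
        ∏ i, (bary n t i ^ (φ i / k - 1) * C i) := Finset.prod_le_prod hnn hfac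
    _ = (∏ i, C i) * ∏ i, bary n t i ^ (φ i / k - 1) := by
        rw [Finset.prod_mul_distrib, mul_comm]

theorem stmt17 (n : ℕ) (hn : 2 ≤ n) (k : ℝ) (hk : 0 < k)
    (p q η ζ : Fin n → ℝ)
    (hp : ∀ i, 0 < p i) (hqp : ∀ i, 0 < q i - p i)
    (hη : ∀ i, 0 < η i) (hζ : ∀ i, 0 ≤ ζ i)
    (φ : Fin n → ℝ) (hφ : ∀ i, 0 < φ i) :
    betaKe2 n k φ η * ∏ i, F1k k (p i) (q i) (-((ζ i)^k) / (η i)^k) ≤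
      betaSecond n k p q η ζ φ := by
  unfold betaKe2 betaSecond
  rw [mul_assoc]
  refine mul_le_mul_of_nonneg_left ?_ (by positivity)
  rw [← integral_mul_const]
  refine setIntegral_mono_on
    ((integrableOn_LHS n hn hk φ η hη).mul_const _)
    (integrableOn_RHS n hn hk p q η ζ φ hp hqp hη hζ hφ)
    (measurableSet_simplexInt n) fun t ht => ?_
  rw [← Finset.prod_mul_distrib]
  refine Finset.prod_le_prod (fun i _ => ?_) (fun i _ => ?_)
  · exact mul_nonneg (mul_nonneg (rpow_nonneg (bary_pos ht i).le _) (Real.exp_pos _).le)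
      (F1k_nonneg hk (hp i) (hqp i) _)
  · have hb0 : 0 < bary n t i := bary_pos ht i
    have hb1 : bary n t i ≤ 1 := (bary_lt_one hn ht i).le
    have hA : 0 ≤ (η i)^k / (k * bary n t i) := by
      have := Real.rpow_pos_of_pos (hη i) k
      positivity
    have hB : 0 ≤ (ζ i)^k / (η i)^k := by
      have h1 := Real.rpow_pos_of_pos (hη i) k
      have h2 := Real.rpow_nonneg (hζ i) k
      positivity
    have key := F1k_key hk (hp i) (hqp i) hA hB hb0 hb1
    have e1 : -((η i)^k)/(k * bary n t i) = -((η i)^k / (k * bary n t i)) := by ring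
    have e2 : -((ζ i)^k) / (η i)^k = -((ζ i)^k / (η i)^k) := by ring
    have e3 : -((η i)^k)/(k * bary n t i) - (ζ i)^k * bary n t i / (η i)^k =
        -((η i)^k / (k * bary n t i)) - ((ζ i)^k / (η i)^k) * bary n t i := by ring
    rw [mul_assoc, e3, e1, e2]
    exact mul_le_mul_of_nonneg_left key (rpow_nonneg hb0.le _)
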